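/- Let f : [0,∞) → ℝ be non-zero, right continuous at some point, and g : [0,∞) → [0,∞) satisfy f(s + g(s)·t) = f(s) + f(t) for all s,t ≥ 0. Then either g ≡ 1 and f(s) = a·s for some a ≠ 0, or there exist α > 0 and a ≠ 0 such that g(s) = αs + 1 and f(s) = a·log(αs+1) for all s ≥ 0. -/

import Mathlib

open Filter Set Topology

private lemma seq_within {a : ℕ → ℝ} {L : ℝ} (h1 : Tendsto a atTop (𝓝 L))
    (h2 : ∀ n, L ≤ a n) : Tendsto a atTop (𝓝[Set.Ici L] L) :=
  tendsto_nhdsWithin_iff.2 ⟨h1, Eventually.of_forall h2⟩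

section FE
variable {f g : ℝ → ℝ}

private lemma fe_f0 (heq : ∀ s t : ℝ, 0 ≤ s → 0 ≤ t → f (s + g s * t) = f s + f t) :
    f 0 = 0 := by
  have h := heq 0 0 le_rfl le_rfl
  simp at h
  linarith

private lemma fe_gpos (hgnn : ∀ s : ℝ, 0 ≤ s → 0 ≤ g s)
    (heq : ∀ s t : ℝ, 0 ≤ s → 0 ≤ t → f (s + g s * t) = f s + f t)
    (hfnz : ∃ s : ℝ, 0 ≤ s ∧ f s ≠ 0) : ∀ s : ℝ, 0 ≤ s → 0 < g s := by
  intro s hs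
  rcases (hgnn s hs).lt_or_eq with h | h
  · exact h
  · exfalso
    obtain ⟨t, ht, hft⟩ := hfnz
    have := heq s t hs ht
    rw [← h] at this
    simp at this
    exact hft (by linarith)

private lemma fe_rc0 (heq : ∀ s t : ℝ, 0 ≤ s → 0 ≤ t → f (s + g s * t) = f s + f t)
    (hgpos : ∀ s : ℝ, 0 ≤ s → 0 < g s) (hf0 : f 0 = 0)
    (hrc : ∃ s : ℝ, 0 ≤ s ∧ ContinuousWithinAt f (Set.Ici s) s) :
    ContinuousWithinAt f (Set.Ici 0) 0 := by
  obtain ⟨s₀, hs₀, hc⟩ := hrc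
  have hgs₀ := hgpos s₀ hs₀
  -- map t ↦ s₀ + g s₀ * t
  have hmap : Tendsto (fun t : ℝ => s₀ + g s₀ * t) (𝓝[Set.Ici 0] 0) (𝓝[Set.Ici s₀] s₀) := by
    apply tendsto_nhdsWithin_iff.2
    constructor
    · have : Tendsto (fun t : ℝ => s₀ + g s₀ * t) (𝓝 0) (𝓝 (s₀ + g s₀ * 0)) :=
        (Continuous.tendsto (by continuity) 0)
      simpa using this.mono_left nhdsWithin_le_nhds
    · filter_upwards [self_mem_nhdsWithin] with t ht
      have : (0:ℝ) ≤ t := ht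
      have : s₀ ≤ s₀ + g s₀ * t := by nlinarith
      exact this
  have hcomp : Tendsto (fun t : ℝ => f (s₀ + g s₀ * t)) (𝓝[Set.Ici 0] 0) (𝓝 (f s₀)) :=
    Filter.Tendsto.comp hc hmap
  have heqev : ∀ᶠ t in 𝓝[Set.Ici 0] (0:ℝ), f (s₀ + g s₀ * t) = f s₀ + f t := by
    filter_upwards [self_mem_nhdsWithin] with t ht
    exact heq s₀ t hs₀ ht
  have : Tendsto (fun t : ℝ => f s₀ + f t) (𝓝[Set.Ici 0] 0) (𝓝 (f s₀)) :=
    hcomp.congr' heqev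
  have := this.sub_const (f s₀)
  simp only [add_sub_cancel_left] at this
  simpa [ContinuousWithinAt, hf0] using this

private lemma fe_rcAll (heq : ∀ s t : ℝ, 0 ≤ s → 0 ≤ t → f (s + g s * t) = f s + f t)
    (hgpos : ∀ s : ℝ, 0 ≤ s → 0 < g s)
    (hrc0 : ContinuousWithinAt f (Set.Ici 0) 0) :
    ∀ s : ℝ, 0 ≤ s → ContinuousWithinAt f (Set.Ici s) s := by
  intro s hs
  have hgs := hgpos s hs
  have hmap : Tendsto (fun x : ℝ => (x - s) / g s) (𝓝[Set.Ici s] s) (𝓝[Set.Ici 0] 0) := by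
    apply tendsto_nhdsWithin_iff.2
    constructor
    · have : Tendsto (fun x : ℝ => (x - s) / g s) (𝓝 s) (𝓝 ((s - s) / g s)) :=
        Continuous.tendsto (by continuity) s
      simpa using this.mono_left nhdsWithin_le_nhds
    · filter_upwards [self_mem_nhdsWithin] with x hx
      have : s ≤ x := hx
      exact div_nonneg (by linarith) hgs.le
  have hcomp : Tendsto (fun x : ℝ => f s + f ((x - s) / g s)) (𝓝[Set.Ici s] s)
      (𝓝 (f s + f 0)) := by
    exact tendsto_const_nhds.add (Filter.Tendsto.comp hrc0 hmap)
  have hf0 : f 0 = 0 := fe_f0 heq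
  rw [hf0, add_zero] at hcomp
  apply hcomp.congr'
  filter_upwards [self_mem_nhdsWithin] with x hx
  have hxs : s ≤ x := hx
  have h := heq s ((x - s) / g s) hs (div_nonneg (by linarith) hgs.le)
  rw [mul_div_cancel₀ _ (ne_of_gt hgs)] at h
  simp only [add_sub_cancel] at h
  rw [h]
-- scaling lemma: f (l*t) = f t for all t≥0, l>0, l≠1 ⇒ f ≡ 0 on [0,∞)
private lemma fe_scale (hrc0 : ContinuousWithinAt f (Set.Ici 0) 0) (hf0 : f 0 = 0)
    {l : ℝ} (hl : 0 < l) (hl1 : l ≠ 1) (hfl : ∀ t : ℝ, 0 ≤ t → f (l * t) = f t) :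
    ∀ t : ℝ, 0 ≤ t → f t = 0 := by
  have key : ∀ l' : ℝ, 0 < l' → l' < 1 → (∀ t : ℝ, 0 ≤ t → f (l' * t) = f t) →
      ∀ t : ℝ, 0 ≤ t → f t = 0 := by
    intro l' hl' hl'1 hfl' t ht
    have hiter : ∀ n : ℕ, f (l' ^ n * t) = f t := by
      intro n
      induction n with
      | zero => simp
      | succ n ih =>
        have h := hfl' (l' ^ n * t) (by positivity)
        rw [← mul_assoc, ← pow_succ'] at h
        rw [h, ih]
    have htend : Tendsto (fun n : ℕ => l' ^ n * t) atTop (𝓝[Set.Ici 0] 0) := by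
      apply seq_within
      · have := tendsto_pow_atTop_nhds_zero_of_lt_one hl'.le hl'1
        simpa using this.mul_const t
      · intro n; positivity
    have : Tendsto (fun n : ℕ => f (l' ^ n * t)) atTop (𝓝 (f 0)) :=
      Filter.Tendsto.comp hrc0 htend
    rw [hf0] at this
    have h2 : Tendsto (fun _ : ℕ => f t) atTop (𝓝 (f t)) := tendsto_const_nhds
    have := tendsto_nhds_unique (this.congr (fun n => hiter n)) h2
    exact this.symm
  rcases lt_or_gt_of_ne hl1 with h | h
  · exact key l hl h hfl
  · apply key l⁻¹ (by positivity) (by rw [inv_lt_one_iff₀]; right; exact h)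
    intro t ht
    have := hfl (l⁻¹ * t) (by positivity)
    rw [← mul_assoc, mul_inv_cancel₀ (ne_of_gt hl), one_mul] at this
    exact this.symm

-- sequence with g → 0 kills f
private lemma fe_gzero (heq : ∀ s t : ℝ, 0 ≤ s → 0 ≤ t → f (s + g s * t) = f s + f t)
    (hrc0 : ContinuousWithinAt f (Set.Ici 0) 0) (hf0 : f 0 = 0)
    {z : ℕ → ℝ} (hz0 : ∀ n, 0 ≤ z n) (hzt : Tendsto z atTop (𝓝 0))
    (hgz0 : ∀ n, 0 ≤ g (z n)) (hgt : Tendsto (fun n => g (z n)) atTop (𝓝 0)) :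
    ∀ t : ℝ, 0 ≤ t → f t = 0 := by
  intro t ht
  have harg : Tendsto (fun n => z n + g (z n) * t) atTop (𝓝[Set.Ici 0] 0) := by
    apply seq_within
    · have := hzt.add (hgt.mul_const t)
      simpa using this
    · intro n
      have := hz0 n; have := hgz0 n; nlinarith
  have hL : Tendsto (fun n => f (z n + g (z n) * t)) atTop (𝓝 0) := by
    have := Filter.Tendsto.comp hrc0 harg
    rwa [hf0] at this
  have hfz : Tendsto (fun n => f (z n)) atTop (𝓝 0) := by
    have := Filter.Tendsto.comp hrc0 (seq_within hzt hz0)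
    rwa [hf0] at this
  have hR : Tendsto (fun n => f (z n) + f t) atTop (𝓝 (0 + f t)) :=
    hfz.add tendsto_const_nhds
  rw [zero_add] at hR
  have hcong : (fun n => f (z n + g (z n) * t)) = fun n => f (z n) + f t :=
    funext fun n => heq (z n) t (hz0 n) ht
  rw [hcong] at hL
  exact (tendsto_nhds_unique hR hL)
-- Lemma D: limit of g along a positive sequence → 0 gives scaling relation
private lemma fe_limit (heq : ∀ s t : ℝ, 0 ≤ s → 0 ≤ t → f (s + g s * t) = f s + f t)
    (hrc0 : ContinuousWithinAt f (Set.Ici 0) 0) (hf0 : f 0 = 0)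
    (hrcAll : ∀ s : ℝ, 0 ≤ s → ContinuousWithinAt f (Set.Ici s) s)
    {z : ℕ → ℝ} (hz0 : ∀ n, 0 < z n) (hzt : Tendsto z atTop (𝓝 0))
    {l : ℝ} (hl : 0 < l) (hgt : Tendsto (fun n => g (z n)) atTop (𝓝 l))
    (hgpos : ∀ n, 0 < g (z n))
    (hside : (∀ n, l ≤ g (z n)) ∨ (∀ n, g (z n) ≤ l)) :
    ∀ t : ℝ, 0 ≤ t → f (l * t) = f t := by
  have hfz : Tendsto (fun n => f (z n)) atTop (𝓝 0) := by
    have := Filter.Tendsto.comp hrc0 (seq_within hzt (fun n => (hz0 n).le))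
    rwa [hf0] at this
  intro t ht
  rcases hside with hS | hS
  · -- g (z n) ≥ l : plug t directly
    have harg : Tendsto (fun n => z n + g (z n) * t) atTop (𝓝[Set.Ici (l * t)] (l * t)) := by
      apply seq_within
      · have := hzt.add (hgt.mul_const t)
        simpa using this
      · intro n
        have h1 := (hz0 n).le
        have h2 := hS n
        nlinarith
    have hL : Tendsto (fun n => f (z n + g (z n) * t)) atTop (𝓝 (f (l * t))) :=
      Filter.Tendsto.comp (hrcAll (l * t) (by positivity)) harg
    have hcong : (fun n => f (z n + g (z n) * t)) = fun n => f (z n) + f t :=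
      funext fun n => heq (z n) t (hz0 n).le ht
    rw [hcong] at hL
    have hR : Tendsto (fun n => f (z n) + f t) atTop (𝓝 (0 + f t)) :=
      hfz.add tendsto_const_nhds
    rw [zero_add] at hR
    exact tendsto_nhds_unique hL hR
  · -- g (z n) ≤ l : plug t_n = l * t / g (z n)
    set tn : ℕ → ℝ := fun n => l * t / g (z n) with htn
    have htn_ge : ∀ n, t ≤ tn n := by
      intro n
      show t ≤ l * t / g (z n)
      rw [le_div_iff₀ (hgpos n)]
      have := hS n; nlinarith
    have htn_nn : ∀ n, 0 ≤ tn n := fun n => le_trans ht (htn_ge n)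
    have htn_t : Tendsto tn atTop (𝓝[Set.Ici t] t) := by
      apply seq_within _ htn_ge
      have h1 : Tendsto (fun n => l * t / g (z n)) atTop (𝓝 (l * t / l)) :=
        tendsto_const_nhds.div hgt (ne_of_gt hl)
      have h2 : l * t / l = t := by field_simp
      rwa [h2] at h1
    have hfn : Tendsto (fun n => f (tn n)) atTop (𝓝 (f t)) :=
      Filter.Tendsto.comp (hrcAll t ht) htn_t
    have harg : ∀ n, z n + g (z n) * tn n = z n + l * t := by
      intro n
      rw [htn, mul_div_cancel₀ _ (ne_of_gt (hgpos n))]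
    have hargT : Tendsto (fun n => z n + l * t) atTop (𝓝[Set.Ici (l * t)] (l * t)) := by
      apply seq_within
      · simpa using hzt.add_const (l * t)
      · intro n; have := (hz0 n).le; linarith
    have hL : Tendsto (fun n => f (z n + l * t)) atTop (𝓝 (f (l * t))) :=
      Filter.Tendsto.comp (hrcAll (l * t) (by positivity)) hargT
    have hcong : (fun n => f (z n + l * t)) = fun n => f (z n) + f (tn n) := by
      funext n
      rw [← harg n]
      exact heq (z n) (tn n) (hz0 n).le (htn_nn n)
    rw [hcong] at hL
    have hR : Tendsto (fun n => f (z n) + f (tn n)) atTop (𝓝 (0 + f t)) :=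
      hfz.add hfn
    rw [zero_add] at hR
    exact tendsto_nhds_unique hL hR
-- Lemma E: zeros z n ↓ 0 with g (z n) ≥ 1, g (z n) → 1 kill f
private lemma fe_period (heq : ∀ s t : ℝ, 0 ≤ s → 0 ≤ t → f (s + g s * t) = f s + f t)
    (hf0 : f 0 = 0)
    (hrcAll : ∀ s : ℝ, 0 ≤ s → ContinuousWithinAt f (Set.Ici s) s)
    {z : ℕ → ℝ} (hz0 : ∀ n, 0 < z n) (hzt : Tendsto z atTop (𝓝 0))
    (hfz : ∀ n, f (z n) = 0) (hg1 : ∀ n, 1 ≤ g (z n))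
    (hgt : Tendsto (fun n => g (z n)) atTop (𝓝 1)) :
    ∀ t : ℝ, 0 ≤ t → f t = 0 := by
  intro T hT
  have hex : ∀ n : ℕ, ∃ u : ℝ, T < u ∧ u ≤ z n + g (z n) * T ∧ f u = 0 := by
    intro n
    set c := g (z n) with hc
    have hc1 : 1 ≤ c := hg1 n
    have hzn := hz0 n
    set S : ℕ → ℝ := fun k => (fun s => z n + c * s)^[k] 0 with hS
    have hSsucc : ∀ k, S (k + 1) = z n + c * S k := by
      intro k
      simp only [hS]
      rw [Function.iterate_succ_apply']
    have hSnn : ∀ k, 0 ≤ S k := by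
      intro k
      induction k with
      | zero => simp [hS]
      | succ k ih => rw [hSsucc]; nlinarith
    have hSz : ∀ k, f (S k) = 0 := by
      intro k
      induction k with
      | zero => simpa [hS] using hf0
      | succ k ih =>
        rw [hSsucc]
        rw [heq (z n) (S k) hzn.le (hSnn k), hfz n, ih, add_zero]
    have hSge : ∀ k : ℕ, (k : ℝ) * z n ≤ S k := by
      intro k
      induction k with
      | zero => simp [hS]
      | succ k ih =>
        rw [hSsucc]
        push_cast
        nlinarith [hSnn k]
    have hexk : ∃ k, T < S k := by
      obtain ⟨k, hk⟩ := exists_nat_gt (T / z n)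
      refine ⟨k, ?_⟩
      have : T / z n * z n < (k : ℝ) * z n := by
        apply mul_lt_mul_of_pos_right hk hzn
      rw [div_mul_cancel₀ _ (ne_of_gt hzn)] at this
      exact lt_of_lt_of_le this (hSge k)
    classical
    let k₀ := Nat.find hexk
    have hk₀ : T < S k₀ := Nat.find_spec hexk
    have hk₀ne : k₀ ≠ 0 := by
      intro h
      have : S 0 = 0 := by simp [hS]
      rw [h, this] at hk₀
      exact absurd hk₀ (not_lt.2 hT)
    obtain ⟨k₁, hk₁⟩ := Nat.exists_eq_succ_of_ne_zero hk₀ne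
    have hprev : ¬ T < S k₁ := Nat.find_min hexk (by omega)
    push_neg at hprev
    refine ⟨S k₀, hk₀, ?_, hSz k₀⟩
    rw [hk₁, hSsucc]
    nlinarith
  choose u hu1 hu2 hu3 using hex
  have hut : Tendsto u atTop (𝓝[Set.Ici T] T) := by
    apply seq_within
    · apply tendsto_of_tendsto_of_tendsto_of_le_of_le (g := fun _ => T)
        (h := fun n => z n + g (z n) * T) tendsto_const_nhds
      · have : Tendsto (fun n => z n + g (z n) * T) atTop (𝓝 (0 + 1 * T)) :=
          hzt.add (hgt.mul_const T)
        simpa using this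
      · exact fun n => (hu1 n).le
      · exact fun n => hu2 n
    · exact fun n => (hu1 n).le
  have hL : Tendsto (fun n => f (u n)) atTop (𝓝 (f T)) :=
    Filter.Tendsto.comp (hrcAll T hT) hut
  have hR : Tendsto (fun n => f (u n)) atTop (𝓝 0) := by
    simp only [hu3]; exact tendsto_const_nhds
  exact tendsto_nhds_unique hL hR

-- Lemma F: a positive zero with g < 1 kills f
private lemma fe_contract (hgnn : ∀ s : ℝ, 0 ≤ s → 0 ≤ g s)
    (heq : ∀ s t : ℝ, 0 ≤ s → 0 ≤ t → f (s + g s * t) = f s + f t)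
    (hrcAll : ∀ s : ℝ, 0 ≤ s → ContinuousWithinAt f (Set.Ici s) s)
    {w : ℝ} (hw : 0 < w) (hfw : f w = 0) (hb : g w < 1) :
    ∀ t : ℝ, 0 ≤ t → f t = 0 := by
  set b := g w with hbdef
  have hb0 : 0 ≤ b := hgnn w hw.le
  set p := w / (1 - b) with hp
  have h1b : 0 < 1 - b := by linarith
  have hppos : 0 < p := div_pos hw h1b
  have hwp : w = p * (1 - b) := by rw [hp]; field_simp
  have hconst : ∀ t : ℝ, p ≤ t → f t = f p := by
    intro t htp
    set v : ℕ → ℝ := fun k => p + b ^ k * (t - p) with hv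
    have hvp : ∀ k, p ≤ v k := by
      intro k
      simp only [hv]
      nlinarith [pow_nonneg hb0 k]
    have hvf : ∀ k, f (v k) = f t := by
      intro k
      induction k with
      | zero => simp [hv]
      | succ k ih =>
        have harg : w + b * v k = v (k + 1) := by
          simp only [hv]
          rw [hwp]; ring
        have := heq w (v k) hw.le (le_trans hppos.le (hvp k))
        rw [← hbdef, harg, hfw, zero_add] at this
        rw [this, ih]
    have hvt : Tendsto v atTop (𝓝[Set.Ici p] p) := by
      apply seq_within _ hvp
      have : Tendsto (fun k : ℕ => p + b ^ k * (t - p)) atTop (𝓝 (p + 0 * (t - p))) :=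
        tendsto_const_nhds.add
          ((tendsto_pow_atTop_nhds_zero_of_lt_one hb0 hb).mul_const (t - p))
      simpa using this
    have hL : Tendsto (fun k => f (v k)) atTop (𝓝 (f p)) :=
      Filter.Tendsto.comp (hrcAll p hppos.le) hvt
    have hR : Tendsto (fun k => f (v k)) atTop (𝓝 (f t)) := by
      simp only [hvf]; exact tendsto_const_nhds
    exact tendsto_nhds_unique hR hL
  intro t ht
  have h := heq p t hppos.le ht
  have harg : p ≤ p + g p * t := by nlinarith [hgnn p hppos.le]
  rw [hconst _ harg] at h
  linarith
-- peel: additivity with small first argument extends to full additivity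
private lemma add_peel {h : ℝ → ℝ} {c : ℝ} (hc : 0 < c)
    (H : ∀ x : ℝ, 0 ≤ x → x < c → ∀ y : ℝ, 0 ≤ y → h (x + y) = h x + h y) :
    ∀ x y : ℝ, 0 ≤ x → 0 ≤ y → h (x + y) = h x + h y := by
  have h0 : h 0 = 0 := by
    have := H 0 le_rfl hc 0 le_rfl
    simp at this
    linarith
  have key : ∀ n : ℕ, ∀ x y : ℝ, 0 ≤ x → x ≤ (n : ℝ) * (c / 2) → 0 ≤ y →
      h (x + y) = h x + h y := by
    intro n
    induction n with
    | zero =>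
      intro x y hx hxn hy
      simp at hxn
      have hx0 : x = 0 := le_antisymm hxn hx
      rw [hx0, zero_add, h0, zero_add]
    | succ n ih =>
      intro x y hx hxn hy
      by_cases hxc : x < c
      · exact H x hx hxc y hy
      · push_neg at hxc
        have hx2 : c / 2 ≤ x := by linarith
        have hxm : 0 ≤ x - c / 2 := by linarith
        have hxm2 : x - c / 2 ≤ (n : ℝ) * (c / 2) := by
          push_cast at hxn ⊢
          linarith
        have e1 : h (x + y) = h (c / 2) + h ((x - c / 2) + y) := by
          have := H (c / 2) (by linarith) (by linarith) ((x - c / 2) + y)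
            (by linarith)
          rw [← this]
          ring_nf
        have e2 : h ((x - c / 2) + y) = h (x - c / 2) + h y := ih _ y hxm hxm2 hy
        have e3 : h x = h (c / 2) + h (x - c / 2) := by
          have := H (c / 2) (by linarith) (by linarith) (x - c / 2) hxm
          rw [← this]
          ring_nf
        rw [e1, e2, e3]
        ring
  intro x y hx hy
  obtain ⟨n, hn⟩ := exists_nat_ge (x / (c / 2))
  have : x ≤ (n : ℝ) * (c / 2) := by
    rw [div_le_iff₀ (by linarith)] at hn
    linarith
  exact key n x y hx this hy

-- additive + right continuity at 0 ⇒ linear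
private lemma add_linear {h : ℝ → ℝ}
    (hadd : ∀ x y : ℝ, 0 ≤ x → 0 ≤ y → h (x + y) = h x + h y)
    (hc : ContinuousWithinAt h (Set.Ici 0) 0) :
    ∀ x : ℝ, 0 ≤ x → h x = h 1 * x := by
  have h0 : h 0 = 0 := by have := hadd 0 0 le_rfl le_rfl; simp at this; linarith
  have hnat : ∀ n : ℕ, ∀ x : ℝ, 0 ≤ x → h ((n : ℝ) * x) = (n : ℝ) * h x := by
    intro n
    induction n with
    | zero => intro x hx; simpa using h0
    | succ n ih =>
      intro x hx
      push_cast
      have : ((n : ℝ) + 1) * x = (n : ℝ) * x + x := by ring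
      rw [this, hadd ((n : ℝ) * x) x (by positivity) hx, ih x hx]
      ring
  have hq : ∀ n k : ℕ, 0 < k → h ((n : ℝ) / (k : ℝ)) = (n : ℝ) / (k : ℝ) * h 1 := by
    intro n k hk
    have hkR : (0 : ℝ) < (k : ℝ) := by exact_mod_cast hk
    have hinv : h ((k : ℝ)⁻¹) = h 1 / (k : ℝ) := by
      have := hnat k ((k : ℝ)⁻¹) (by positivity)
      rw [mul_inv_cancel₀ (ne_of_gt hkR)] at this
      field_simp at this ⊢
      linarith
    have := hnat n ((k : ℝ)⁻¹) (by positivity)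
    rw [hinv] at this
    rw [div_eq_mul_inv, this]
    field_simp
  intro x hx
  set q : ℕ → ℝ := fun j => (Nat.ceil (x * (j + 1)) : ℝ) / ((j : ℝ) + 1) with hqdef
  have hq_ge : ∀ j : ℕ, x ≤ q j := by
    intro j
    rw [hqdef]
    rw [le_div_iff₀ (by positivity)]
    exact_mod_cast Nat.le_ceil (x * ((j : ℝ) + 1))
  have hq_le : ∀ j : ℕ, q j ≤ x + 1 / ((j : ℝ) + 1) := by
    intro j
    rw [hqdef]
    rw [div_le_iff₀ (by positivity)]
    have h1 := Nat.ceil_lt_add_one (a := x * ((j : ℝ) + 1)) (by positivity)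
    have e : (x + 1 / ((j : ℝ) + 1)) * ((j : ℝ) + 1) = x * ((j : ℝ) + 1) + 1 := by
      field_simp
    rw [e]
    exact le_of_lt h1
  have hj1 : Tendsto (fun j : ℕ => 1 / ((j : ℝ) + 1)) atTop (𝓝 0) :=
    tendsto_one_div_add_atTop_nhds_zero_nat
  have hqt : Tendsto q atTop (𝓝 x) := by
    refine tendsto_of_tendsto_of_tendsto_of_le_of_le tendsto_const_nhds ?_ hq_ge hq_le
    have h4 : Tendsto (fun j : ℕ => x + 1 / ((j : ℝ) + 1)) atTop (𝓝 (x + 0)) :=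
      tendsto_const_nhds.add hj1
    simpa using h4
  have heps : Tendsto (fun j => q j - x) atTop (𝓝[Set.Ici 0] 0) := by
    apply seq_within
    · simpa using hqt.sub_const x
    · intro j; have := hq_ge j; simp; linarith
  have hval : ∀ j : ℕ, h (q j) = h x + h (q j - x) := by
    intro j
    have := hadd x (q j - x) hx (by have := hq_ge j; linarith)
    rw [add_sub_cancel] at this
    exact this
  have hL : Tendsto (fun j => h (q j)) atTop (𝓝 (h x + 0)) := by
    have h2 : Tendsto (fun j => h (q j - x)) atTop (𝓝 0) := by
      have := Filter.Tendsto.comp hc heps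
      rwa [h0] at this
    have h3 : Tendsto (fun j => h x + h (q j - x)) atTop (𝓝 (h x + 0)) :=
      tendsto_const_nhds.add h2
    exact h3.congr fun j => (hval j).symm
  rw [add_zero] at hL
  have hqval : ∀ j : ℕ, h (q j) = q j * h 1 := by
    intro j
    rw [hqdef]
    have := hq (Nat.ceil (x * ((j : ℝ) + 1))) (j + 1) (by omega)
    push_cast at this ⊢
    exact this
  have hR : Tendsto (fun j => h (q j)) atTop (𝓝 (x * h 1)) := by
    have := hqt.mul_const (h 1)
    exact this.congr fun j => (hqval j).symm
  have := tendsto_nhds_unique hL hR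
  rw [this]; ring
-- if g = 1 near 0, then f is linear
private lemma fe_lin_form (heq : ∀ s t : ℝ, 0 ≤ s → 0 ≤ t → f (s + g s * t) = f s + f t)
    (hrc0 : ContinuousWithinAt f (Set.Ici 0) 0)
    {δ : ℝ} (hδ : 0 < δ) (hg : ∀ s : ℝ, 0 ≤ s → s < δ → g s = 1) :
    ∀ s : ℝ, 0 ≤ s → f s = f 1 * s := by
  have H : ∀ x : ℝ, 0 ≤ x → x < δ → ∀ y : ℝ, 0 ≤ y → f (x + y) = f x + f y := by
    intro x hx hxδ y hy
    have := heq x y hx hy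
    rwa [hg x hx hxδ, one_mul] at this
  exact add_linear (add_peel hδ H) hrc0

-- if g s = α s + 1 near 0 with α > 0, then f is logarithmic
private lemma fe_log_form (heq : ∀ s t : ℝ, 0 ≤ s → 0 ≤ t → f (s + g s * t) = f s + f t)
    (hrc0 : ContinuousWithinAt f (Set.Ici 0) 0)
    {α δ : ℝ} (hα : 0 < α) (hδ : 0 < δ)
    (hg : ∀ s : ℝ, 0 ≤ s → s < δ → g s = α * s + 1) :
    ∃ a : ℝ, ∀ s : ℝ, 0 ≤ s → f s = a * Real.log (α * s + 1) := by
  set L : ℝ → ℝ := fun x => f ((Real.exp x - 1) / α) with hL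
  set c : ℝ := Real.log (α * δ + 1) with hc
  have hcpos : 0 < c := Real.log_pos (by nlinarith)
  have Hsmall : ∀ x : ℝ, 0 ≤ x → x < c → ∀ y : ℝ, 0 ≤ y → L (x + y) = L x + L y := by
    intro x hx hxc y hy
    set s := (Real.exp x - 1) / α with hs
    set t := (Real.exp y - 1) / α with ht
    have hs0 : 0 ≤ s := by
      apply div_nonneg _ hα.le
      have := Real.one_le_exp hx
      linarith
    have ht0 : 0 ≤ t := by
      apply div_nonneg _ hα.le
      have := Real.one_le_exp hy
      linarith
    have hsδ : s < δ := by
      have h1 : Real.exp x < Real.exp c := Real.exp_lt_exp.2 hxc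
      rw [hc, Real.exp_log (by nlinarith)] at h1
      rw [hs, div_lt_iff₀ hα]
      linarith
    have hgs : g s = Real.exp x := by
      rw [hg s hs0 hsδ, hs]
      field_simp
      ring
    have harg : s + g s * t = (Real.exp (x + y) - 1) / α := by
      rw [hgs, hs, ht, Real.exp_add]
      field_simp
      ring
    have := heq s t hs0 ht0
    rw [harg] at this
    exact this
  have Ladd := add_peel hcpos Hsmall
  have Lcont : ContinuousWithinAt L (Set.Ici 0) 0 := by
    have hφ : Tendsto (fun x : ℝ => (Real.exp x - 1) / α) (𝓝[Set.Ici 0] 0)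
        (𝓝[Set.Ici 0] 0) := by
      apply tendsto_nhdsWithin_iff.2
      constructor
      · have : Tendsto (fun x : ℝ => (Real.exp x - 1) / α) (𝓝 0)
            (𝓝 ((Real.exp 0 - 1) / α)) := Continuous.tendsto (by continuity) 0
        simpa using this.mono_left nhdsWithin_le_nhds
      · filter_upwards [self_mem_nhdsWithin] with x hx
        have : (0:ℝ) ≤ x := hx
        have := Real.one_le_exp this
        have : (0:ℝ) ≤ (Real.exp x - 1) / α := div_nonneg (by linarith) hα.le
        exact this
    have := Filter.Tendsto.comp hrc0 hφ
    have hL0 : L 0 = f 0 := by simp [hL]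
    rw [ContinuousWithinAt, hL0]; exact this
  have Llin := add_linear Ladd Lcont
  refine ⟨L 1, fun s hs => ?_⟩
  have hpos : 0 < α * s + 1 := by nlinarith
  have hx0 : 0 ≤ Real.log (α * s + 1) := Real.log_nonneg (by nlinarith)
  have hval : (Real.exp (Real.log (α * s + 1)) - 1) / α = s := by
    rw [Real.exp_log hpos]
    field_simp
    ring
  have := Llin (Real.log (α * s + 1)) hx0
  rw [hL] at this
  simp only [hval] at this
  rw [this]
-- Bolzano–Weierstrass with a one-sided subsequence
private lemma bw_side {u : ℕ → ℝ} {A B : ℝ} (hb : ∀ n, u n ∈ Set.Icc A B) :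
    ∃ γ ∈ Set.Icc A B, ∃ ψ : ℕ → ℕ, StrictMono ψ ∧
      Tendsto (fun n => u (ψ n)) atTop (𝓝 γ) ∧
      ((∀ n, γ ≤ u (ψ n)) ∨ (∀ n, u (ψ n) ≤ γ)) := by
  obtain ⟨γ, hγ, φ, hφ, ht⟩ :=
    tendsto_subseq_of_bounded (Metric.isBounded_Icc A B) hb
  rw [isClosed_Icc.closure_eq] at hγ
  have hor : (∃ᶠ n in atTop, γ ≤ u (φ n)) ∨ (∃ᶠ n in atTop, u (φ n) ≤ γ) := by
    rw [← frequently_or_distrib]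
    exact Eventually.frequently (Eventually.of_forall fun n => le_total γ (u (φ n)))
  rcases hor with hfr | hfr
  · obtain ⟨ψ', hψ', hP⟩ := extraction_of_frequently_atTop hfr
    refine ⟨γ, hγ, φ ∘ ψ', hφ.comp hψ', ?_, Or.inl hP⟩
    exact ht.comp hψ'.tendsto_atTop
  · obtain ⟨ψ', hψ', hP⟩ := extraction_of_frequently_atTop hfr
    refine ⟨γ, hγ, φ ∘ ψ', hφ.comp hψ', ?_, Or.inr hP⟩
    exact ht.comp hψ'.tendsto_atTop
private lemma fe_no_zero (hgnn : ∀ s : ℝ, 0 ≤ s → 0 ≤ g s)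
    (heq : ∀ s t : ℝ, 0 ≤ s → 0 ≤ t → f (s + g s * t) = f s + f t)
    (hfnz : ∃ s : ℝ, 0 ≤ s ∧ f s ≠ 0)
    (hgpos : ∀ s : ℝ, 0 ≤ s → 0 < g s) (hf0 : f 0 = 0)
    (hrc0 : ContinuousWithinAt f (Set.Ici 0) 0)
    (hrcAll : ∀ s : ℝ, 0 ≤ s → ContinuousWithinAt f (Set.Ici s) s) :
    ∀ z : ℝ, 0 < z → f z ≠ 0 := by
  have done : (∀ t : ℝ, 0 ≤ t → f t = 0) → False := by
    intro h
    obtain ⟨s, hs, hfs⟩ := hfnz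
    exact hfs (h s hs)
  intro z₀ hz₀pos
  by_contra hfz₀
  set W : Set ℝ := {w : ℝ | 0 < w ∧ f w = 0} with hW
  have hWne : W.Nonempty := ⟨z₀, hz₀pos, hfz₀⟩
  have hbdd : BddBelow W := ⟨0, fun w hw => hw.1.le⟩
  -- WLOG every positive zero has g ≥ 1
  by_cases hA1' : ∃ w ∈ W, g w < 1
  · obtain ⟨w, hw, hgw⟩ := hA1'
    exact done (fe_contract hgnn heq hrcAll hw.1 hw.2 hgw)
  push_neg at hA1'
  have hA1 : ∀ w ∈ W, 1 ≤ g w := hA1'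
  set m : ℝ := sInf W with hmdef
  have hm0 : 0 ≤ m := Real.sInf_nonneg (fun w hw => hw.1.le)
  have hmin : ∀ w ∈ W, m ≤ w := fun w hw => csInf_le hbdd hw
  -- a sequence in W tending to m
  have hwseq : ∀ n : ℕ, ∃ w ∈ W, w < m + 1 / ((n : ℝ) + 1) := by
    intro n
    exact Real.lt_sInf_add_pos hWne (by positivity)
  choose w hwW hwlt using hwseq
  have hwt : Tendsto w atTop (𝓝 m) := by
    refine tendsto_of_tendsto_of_tendsto_of_le_of_le tendsto_const_nhds ?_
      (fun n => hmin _ (hwW n)) (fun n => (hwlt n).le)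
    have h4 : Tendsto (fun n : ℕ => m + 1 / ((n : ℝ) + 1)) atTop (𝓝 (m + 0)) :=
      tendsto_const_nhds.add tendsto_one_div_add_atTop_nhds_zero_nat
    simpa using h4
  have hfm : f m = 0 := by
    have hL : Tendsto (fun n => f (w n)) atTop (𝓝 (f m)) :=
      Filter.Tendsto.comp (hrcAll m hm0) (seq_within hwt (fun n => hmin _ (hwW n)))
    have hR : Tendsto (fun n => f (w n)) atTop (𝓝 0) := by
      have : (fun n => f (w n)) = fun _ => (0:ℝ) := funext fun n => (hwW n).2
      rw [this]; exact tendsto_const_nhds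
    exact tendsto_nhds_unique hL hR
  by_cases hm : m = 0
  · -- zeros accumulate at 0
    have hwt0 : Tendsto w atTop (𝓝 0) := by rwa [hm] at hwt
    have hwpos : ∀ n, 0 < w n := fun n => (hwW n).1
    have hwz : ∀ n, f (w n) = 0 := fun n => (hwW n).2
    have hwg1 : ∀ n, 1 ≤ g (w n) := fun n => hA1 _ (hwW n)
    by_cases hbd : ∃ j : ℕ, ∀ n, j ≤ n → g (w n) ≤ (j : ℝ)
    · -- bounded tail: Bolzano–Weierstrass
      obtain ⟨j₀, hj₀⟩ := hbd
      set z' : ℕ → ℝ := fun n => w (n + j₀) with hz'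
      have hz'mem : ∀ n, g (z' n) ∈ Set.Icc (1:ℝ) (j₀:ℝ) :=
        fun n => ⟨hwg1 (n + j₀), hj₀ (n + j₀) (by omega)⟩
      obtain ⟨γ, hγmem, ψ, hψ, hγt, hside⟩ := bw_side hz'mem
      have hzψpos : ∀ n, 0 < z' (ψ n) := fun n => hwpos _
      have hzψt : Tendsto (fun n => z' (ψ n)) atTop (𝓝 0) := by
        have h1 : Tendsto z' atTop (𝓝 0) :=
          hwt0.comp (tendsto_atTop_mono (fun n => by omega : ∀ n : ℕ, n ≤ n + j₀)
            tendsto_id)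
        exact h1.comp hψ.tendsto_atTop
      rcases eq_or_lt_of_le hγmem.1 with hγ1 | hγ1
      · -- γ = 1 : quasi-periods
        exact done (fe_period heq hf0 hrcAll hzψpos hzψt (fun n => hwz _)
          (fun n => hwg1 _) (by rwa [← hγ1] at hγt))
      · -- γ > 1 : scaling
        have hγpos : (0:ℝ) < γ := by linarith
        have hfl := fe_limit heq hrc0 hf0 hrcAll hzψpos hzψt hγpos hγt
          (fun n => hgpos _ (hzψpos n).le) hside
        exact done (fe_scale hrc0 hf0 hγpos (ne_of_gt hγ1) hfl)
    · -- unbounded: g (w n) gets arbitrarily large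
      push_neg at hbd
      choose nj hnj1 hnj2 using hbd
      set zu : ℕ → ℝ := fun j => w (nj j) with hzu
      have hzut : Tendsto zu atTop (𝓝 0) :=
        hwt0.comp (tendsto_atTop_mono hnj1 tendsto_id)
      have hgu : Tendsto (fun j => g (zu j)) atTop atTop :=
        tendsto_atTop_mono (fun j => (hnj2 j).le) tendsto_natCast_atTop_atTop
      apply done
      intro s hs
      have hgupos : ∀ j, 0 < g (zu j) := fun j => hgpos _ (hwpos _).le
      have key : ∀ j, f (zu j + s) = f (s / g (zu j)) := by
        intro j
        have h1 := heq (zu j) (s / g (zu j)) (hwpos _).le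
          (div_nonneg hs (hgupos j).le)
        rw [mul_div_cancel₀ _ (ne_of_gt (hgupos j)), hwz _, zero_add] at h1
        exact h1
      have hL : Tendsto (fun j => f (zu j + s)) atTop (𝓝 (f s)) := by
        apply Filter.Tendsto.comp (hrcAll s hs)
        apply seq_within
        · simpa using hzut.add_const s
        · intro j; have := (hwpos (nj j)).le; simp only [hzu]; linarith
      have hR : Tendsto (fun j => f (s / g (zu j))) atTop (𝓝 0) := by
        have h2 : Tendsto (fun j => s / g (zu j)) atTop (𝓝[Set.Ici 0] 0) := by
          apply seq_within
          · exact Tendsto.div_atTop tendsto_const_nhds hgu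
          · intro j; exact div_nonneg hs (hgupos j).le
        have := Filter.Tendsto.comp hrc0 h2
        rwa [hf0] at this
      have := hL.congr (fun j => key j)
      exact tendsto_nhds_unique this hR
  · -- m > 0 : minimal positive zero
    have hmpos : 0 < m := lt_of_le_of_ne hm0 (Ne.symm hm)
    set b : ℝ := g m with hb
    have hb1 : 1 ≤ b := hA1 m ⟨hmpos, hfm⟩
    have hbpos : 0 < b := lt_of_lt_of_le one_pos hb1
    have K : ∀ t : ℝ, 0 ≤ t → f (m + b * t) = f t := by
      intro t ht
      have := heq m t hmpos.le ht
      rwa [hfm, zero_add] at this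
    set p : ℕ → ℝ := fun n => (fun x => m + b * x)^[n] 0 with hp
    have p0 : p 0 = 0 := rfl
    have psucc : ∀ n, p (n + 1) = m + b * p n := by
      intro n; simp only [hp]; rw [Function.iterate_succ_apply']
    have pnn : ∀ n, 0 ≤ p n := by
      intro n
      induction n with
      | zero => simp [p0]
      | succ n ih => rw [psucc]; nlinarith
    have pz : ∀ n, f (p n) = 0 := by
      intro n
      induction n with
      | zero => rw [p0]; exact hf0
      | succ n ih => rw [psucc, K (p n) (pnn n), ih]
    have pmono : Monotone p := by
      apply monotone_nat_of_le_succ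
      intro n
      rw [psucc]
      nlinarith [pnn n]
    have p1 : p 1 = m := by rw [psucc, p0]; ring
    have p1pos : ∀ n : ℕ, 1 ≤ n → m ≤ p n := by
      intro n hn
      calc m = p 1 := p1.symm
        _ ≤ p n := pmono hn
    -- characterization of zeros
    have Zaux : ∀ N : ℕ, ∀ z : ℝ, 0 ≤ z → z ≤ (N : ℝ) * m → f z = 0 → ∃ n, z = p n := by
      intro N
      induction N with
      | zero =>
        intro z hz hzN _
        simp at hzN
        exact ⟨0, by rw [p0]; linarith⟩
      | succ N ih =>
        intro z hz hzN hfz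
        rcases eq_or_lt_of_le hz with hz0 | hzpos
        · exact ⟨0, by rw [p0, ← hz0]⟩
        · have hzm : m ≤ z := hmin z ⟨hzpos, hfz⟩
          set z' : ℝ := (z - m) / b with hz'
          have hz'nn : 0 ≤ z' := div_nonneg (by linarith) hbpos.le
          have hz'le : z' ≤ z - m := div_le_self (by linarith) hb1
          have hz'N : z' ≤ (N : ℝ) * m := by
            push_cast at hzN
            linarith
          have hfz' : f z' = 0 := by
            have := K z' hz'nn
            rw [hz', mul_div_cancel₀ _ (ne_of_gt hbpos)] at this
            have e : m + (z - m) = z := by ring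
            rw [e] at this
            rw [← this, hfz]
          obtain ⟨n, hn⟩ := ih z' hz'nn hz'N hfz'
          refine ⟨n + 1, ?_⟩
          rw [psucc, ← hn, hz', mul_div_cancel₀ _ (ne_of_gt hbpos)]
          ring
    have Zchar : ∀ z : ℝ, 0 ≤ z → f z = 0 → ∃ n, z = p n := by
      intro z hz hfz
      obtain ⟨N, hN⟩ := exists_nat_ge (z / m)
      apply Zaux N z hz _ hfz
      rw [div_le_iff₀ hmpos] at hN
      linarith
    -- each positive t yields a zero (m + b t - t)/(g t) = p n, n ≥ 1
    have C1 : ∀ t : ℝ, 0 < t → ∃ n : ℕ, 1 ≤ n ∧ g t = (m + b * t - t) / p n := by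
      intro t ht
      have hgt := hgpos t ht.le
      have hApos : 0 < m + b * t - t := by nlinarith
      set wt : ℝ := (m + b * t - t) / g t with hwt'
      have hwtpos : 0 < wt := div_pos hApos hgt
      have hfwt : f wt = 0 := by
        have h1 := heq t wt ht.le hwtpos.le
        have e : t + g t * wt = m + b * t := by
          rw [hwt', mul_div_cancel₀ _ (ne_of_gt hgt)]; ring
        rw [e, K t ht.le] at h1
        linarith
      obtain ⟨n, hn⟩ := Zchar wt hwtpos.le hfwt
      have hn1 : 1 ≤ n := by
        rcases Nat.eq_zero_or_pos n with h | h
        · exfalso; rw [h, p0] at hn; linarith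
        · exact h
      refine ⟨n, hn1, ?_⟩
      have hpn : 0 < p n := lt_of_lt_of_le hmpos (p1pos n hn1)
      rw [hwt'] at hn
      field_simp at hn ⊢
      linarith [hn]
    have p2 : p 2 = m + b * m := by rw [psucc, p1]
    have p2pos : 0 < p 2 := by rw [p2]; nlinarith
    by_cases hbad : ∀ δ : ℝ, 0 < δ → ∃ t : ℝ, 0 < t ∧ t < δ ∧
        g t ≤ (m + b * t - t) / p 2
    · -- bad branch accumulates at 0
      have hsel : ∀ j : ℕ, ∃ t : ℝ, 0 < t ∧ t < 1 / ((j : ℝ) + 1) ∧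
          g t ≤ (m + b * t - t) / p 2 := fun j => hbad _ (by positivity)
      choose t ht1 ht2 ht3 using hsel
      have htt : Tendsto t atTop (𝓝 0) := by
        refine tendsto_of_tendsto_of_tendsto_of_le_of_le tendsto_const_nhds
          tendsto_one_div_add_atTop_nhds_zero_nat (fun j => (ht1 j).le)
          (fun j => (ht2 j).le)
      have ht1' : ∀ j, t j ≤ 1 := by
        intro j
        have := ht2 j
        have h1 : 1 / ((j : ℝ) + 1) ≤ 1 := by
          rw [div_le_one (by positivity)]
          simp
        linarith
      have hmem : ∀ j, g (t j) ∈ Set.Icc (0:ℝ) ((m + b * 1 - 0) / p 2) := by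
        intro j
        constructor
        · exact (hgpos _ (ht1 j).le).le
        · apply le_trans (ht3 j)
          apply div_le_div_of_nonneg_right _ p2pos.le
          have := ht1' j; have := (ht1 j).le
          nlinarith
      obtain ⟨γ, hγmem, ψ, hψ, hγt, hside⟩ := bw_side hmem
      have htψpos : ∀ n, 0 < t (ψ n) := fun n => ht1 _
      have htψt : Tendsto (fun n => t (ψ n)) atTop (𝓝 0) :=
        htt.comp hψ.tendsto_atTop
      have hγle : γ ≤ m / p 2 := by
        apply le_of_tendsto_of_tendsto' hγt
          (f := fun n => g (t (ψ n))) (g := fun n => (m + b * t (ψ n) - t (ψ n)) / p 2)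
        · have : Tendsto (fun n => (m + b * t (ψ n) - t (ψ n)) / p 2) atTop
              (𝓝 ((m + b * 0 - 0) / p 2)) := by
            apply Tendsto.div_const
            have h9 := (tendsto_const_nhds (x := m)).add ((htψt.const_mul b).sub htψt)
            have e : (fun n => m + b * t (ψ n) - t (ψ n))
                = fun n => m + (b * t (ψ n) - t (ψ n)) := by
              funext n; ring
            rw [e]
            simpa using h9
          simpa using this
        · intro n
          exact ht3 (ψ n)
      have hγlt1 : γ < 1 := by
        apply lt_of_le_of_lt hγle
        rw [div_lt_one p2pos, p2]
        nlinarith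
      rcases eq_or_lt_of_le hγmem.1 with hγ0 | hγ0
      · -- γ = 0
        apply done
        apply fe_gzero heq hrc0 hf0 (fun n => (htψpos n).le) htψt
          (fun n => (hgpos _ (htψpos n).le).le)
        rwa [← hγ0] at hγt
      · have hfl := fe_limit heq hrc0 hf0 hrcAll htψpos htψt hγ0 hγt
          (fun n => hgpos _ (htψpos n).le) hside
        exact done (fe_scale hrc0 hf0 hγ0 (ne_of_lt hγlt1) hfl)
    · -- good: near 0, always the first branch
      push_neg at hbad
      obtain ⟨δ, hδpos, hδ⟩ := hbad
      have hbranch : ∀ t : ℝ, 0 < t → t < δ → g t = (m + b * t - t) / m := by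
        intro t ht htδ
        obtain ⟨n, hn1, hn⟩ := C1 t ht
        rcases eq_or_lt_of_le hn1 with h1 | h2
        · rw [hn, ← h1]
          simp only [p1]  -- p 1 = m
        · exfalso
          have hApos : 0 < m + b * t - t := by nlinarith
          have h2n : p 2 ≤ p n := pmono h2
          have : g t ≤ (m + b * t - t) / p 2 := by
            rw [hn]
            exact div_le_div_of_nonneg_left hApos.le p2pos h2n
          exact absurd this (not_le.2 (hδ t ht htδ))
      -- g 0 = 1
      have hg0mul : ∀ u : ℝ, 0 ≤ u → f (g 0 * u) = f u := by
        intro u hu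
        have := heq 0 u le_rfl hu
        rwa [hf0, zero_add, zero_add] at this
      by_cases hg01 : g 0 = 1
      swap
      · exact done (fe_scale hrc0 hf0 (hgpos 0 le_rfl) hg01 hg0mul)
      set α : ℝ := (b - 1) / m with hα
      have hgδ : ∀ s : ℝ, 0 ≤ s → s < δ → g s = α * s + 1 := by
        intro s hs hsδ
        rcases eq_or_lt_of_le hs with h0 | h0
        · rw [← h0, hg01]; ring
        · rw [hbranch s h0 hsδ, hα]
          field_simp
          ring
      rcases eq_or_lt_of_le hb1 with hb1' | hb1'
      · -- b = 1 : f linear, zero at m, contradiction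
        have hα0 : ∀ s : ℝ, 0 ≤ s → s < δ → g s = 1 := by
          intro s hs hsδ
          rw [hgδ s hs hsδ, hα, ← hb1']
          ring
        have hlin := fe_lin_form heq hrc0 hδpos hα0
        have hfm' := hlin m hmpos.le
        rw [hfm] at hfm'
        have hf1 : f 1 = 0 := by
          rcases mul_eq_zero.1 hfm'.symm with h | h
          · exact h
          · exact absurd h (ne_of_gt hmpos)
        apply done
        intro u hu
        rw [hlin u hu, hf1, zero_mul]
      · -- b > 1 : f logarithmic, zero at m, contradiction
        have hαpos : 0 < α := div_pos (by linarith) hmpos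
        obtain ⟨a, ha⟩ := fe_log_form heq hrc0 hαpos hδpos hgδ
        have hfm' := ha m hmpos.le
        rw [hfm] at hfm'
        have hαm : α * m + 1 = b := by rw [hα]; field_simp; ring
        rw [hαm] at hfm'
        have hlogb : 0 < Real.log b := Real.log_pos hb1'
        have ha0 : a = 0 := by
          rcases mul_eq_zero.1 hfm'.symm with h | h
          · exact h
          · exact absurd h (ne_of_gt hlogb)
        apply done
        intro u hu
        rw [ha u hu, ha0, zero_mul]
end FE

/-- full classification of non-zero solutions right continuous at a point. -/
theorem stmt14 (f : ℝ → ℝ) (g : ℝ → ℝ)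
    (hgnn : ∀ s : ℝ, 0 ≤ s → 0 ≤ g s)
    (heq : ∀ s t : ℝ, 0 ≤ s → 0 ≤ t → f (s + g s * t) = f s + f t)
    (hfnz : ∃ s : ℝ, 0 ≤ s ∧ f s ≠ 0)
    (hrc : ∃ s : ℝ, 0 ≤ s ∧ ContinuousWithinAt f (Set.Ici s) s) :
    ((∀ s : ℝ, 0 ≤ s → g s = 1) ∧ ∃ a : ℝ, a ≠ 0 ∧ ∀ s : ℝ, 0 ≤ s → f s = a * s) ∨
    (∃ α : ℝ, 0 < α ∧ ∃ a : ℝ, a ≠ 0 ∧ ∀ s : ℝ, 0 ≤ s →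
      g s = α * s + 1 ∧ f s = a * Real.log (α * s + 1)) := by
  have hf0 : f 0 = 0 := fe_f0 heq
  have hgpos : ∀ s : ℝ, 0 ≤ s → 0 < g s := fe_gpos hgnn heq hfnz
  have hrc0 : ContinuousWithinAt f (Set.Ici 0) 0 := fe_rc0 heq hgpos hf0 hrc
  have hrcAll : ∀ s : ℝ, 0 ≤ s → ContinuousWithinAt f (Set.Ici s) s :=
    fe_rcAll heq hgpos hrc0
  have hnz : ∀ z : ℝ, 0 < z → f z ≠ 0 :=
    fe_no_zero hgnn heq hfnz hgpos hf0 hrc0 hrcAll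
  -- injectivity of f on [0,∞)
  have half : ∀ u v : ℝ, 0 ≤ u → u < v → f u ≠ f v := by
    intro u v hu huv hfe
    have hgu := hgpos u hu
    set w : ℝ := (v - u) / g u with hw'
    have hw : 0 < w := div_pos (by linarith) hgu
    have h := heq u w hu hw.le
    have e : u + g u * w = v := by
      rw [hw', mul_div_cancel₀ _ (ne_of_gt hgu)]; ring
    rw [e, ← hfe] at h
    exact hnz w hw (by linarith)
  have inj : ∀ u v : ℝ, 0 ≤ u → 0 ≤ v → f u = f v → u = v := by
    intro u v hu hv hfe
    rcases lt_trichotomy u v with h | h | h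
    · exact absurd hfe (half u v hu h)
    · exact h
    · exact absurd hfe.symm (half v u hv h)
  set α : ℝ := g 1 - 1 with hα
  have gform : ∀ s : ℝ, 0 ≤ s → g s = α * s + 1 := by
    intro s hs
    have h1 := heq s 1 hs zero_le_one
    have h2 := heq 1 s zero_le_one hs
    have hfe : f (s + g s * 1) = f (1 + g 1 * s) := by rw [h1, h2, add_comm]
    have hn1 : (0:ℝ) ≤ s + g s * 1 := by nlinarith [hgpos s hs]
    have hn2 : (0:ℝ) ≤ 1 + g 1 * s := by nlinarith [hgpos 1 zero_le_one]
    have harg := inj _ _ hn1 hn2 hfe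
    rw [mul_one] at harg
    rw [hα]
    linarith
  have hα0 : 0 ≤ α := by
    by_contra hneg
    push_neg at hneg
    have hspos : 0 < (-2) / α := div_pos_of_neg_of_neg (by norm_num) hneg
    have := gform ((-2)/α) hspos.le
    rw [mul_div_cancel₀ _ (ne_of_lt hneg)] at this
    have := hgpos ((-2)/α) hspos.le
    linarith
  rcases eq_or_lt_of_le hα0 with hα1 | hα1
  · -- α = 0 : linear case
    left
    have hg1 : ∀ s : ℝ, 0 ≤ s → g s = 1 := by
      intro s hs
      rw [gform s hs, ← hα1]; ring
    refine ⟨hg1, f 1, ?_, ?_⟩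
    · intro hf1
      have hlin := fe_lin_form heq hrc0 one_pos (fun s hs _ => hg1 s hs)
      obtain ⟨s, hs, hfs⟩ := hfnz
      exact hfs (by rw [hlin s hs, hf1, zero_mul])
    · intro s hs
      have hlin := fe_lin_form heq hrc0 one_pos (fun s hs _ => hg1 s hs)
      exact hlin s hs
  · -- α > 0 : logarithmic case
    right
    obtain ⟨a, ha⟩ := fe_log_form heq hrc0 hα1 one_pos (fun s hs _ => gform s hs)
    refine ⟨α, hα1, a, ?_, fun s hs => ⟨gform s hs, ha s hs⟩⟩
    intro ha0
    obtain ⟨s, hs, hfs⟩ := hfnz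
    exact hfs (by rw [ha s hs, ha0, zero_mul])
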